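/- For every configuration of points θ_1,…,θ_n ∈ ℝ^d (no genericity assumption needed), the number of realizable rankings satisfies |Σ_{n,d}| ≤ Σ_{i=0}^{d} C(n(n−1)/2, i), where C denotes the binomial coefficient. (Each realizable ranking corresponds to a distinct nonempty open cell of the arrangement of the at most n(n−1)/2 bisecting hyperplanes, and an arrangement of K hyperplanes in ℝ^d has at most Σ_{i=0}^{d} C(K,i) cells.) -/

import Mathlib

open Finset Module

/-- The set of strict sign patterns realized by a family of affine functionals. -/
def realizedSigns {ι : Type*} {V : Type*} [AddCommGroup V] [Module ℝ V]
    (f : ι → V →ᵃ[ℝ] ℝ) : Set (ι → Bool) :=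
  {s | ∃ x : V, ∀ k, if s k then 0 < f k x else f k x < 0}

lemma affine_ivt {V : Type*} [AddCommGroup V] [Module ℝ V] (F : V →ᵃ[ℝ] ℝ) {x y : V}
    (hx : 0 < F x) (hy : F y < 0) :
    ∃ z : V, F z = 0 ∧ ∀ G : V →ᵃ[ℝ] ℝ,
      (0 < G x → 0 < G y → 0 < G z) ∧ (G x < 0 → G y < 0 → G z < 0) := by
  have hd : 0 < F x - F y := by linarith
  set t : ℝ := F x / (F x - F y) with ht
  have hmul : t * (F x - F y) = F x := div_mul_cancel₀ _ hd.ne'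
  have ht0 : 0 ≤ t := div_nonneg hx.le hd.le
  have ht1 : t ≤ 1 := by rw [div_le_one hd]; linarith
  refine ⟨AffineMap.lineMap x y t, ?_, fun G => ?_⟩
  · rw [AffineMap.apply_lineMap, AffineMap.lineMap_apply_module]
    simp only [smul_eq_mul]
    linear_combination -hmul
  · rw [AffineMap.apply_lineMap, AffineMap.lineMap_apply_module]
    simp only [smul_eq_mul]
    constructor
    · intro h1 h2; nlinarith
    · intro h1 h2; nlinarith

lemma pascal_sum (K m : ℕ) :
    ∑ i ∈ range (m + 1), (K + 1).choose i
      = ∑ i ∈ range (m + 1), K.choose i + ∑ i ∈ range m, K.choose i := by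
  induction m with
  | zero => simp
  | succ m ih =>
    rw [sum_range_succ, ih, sum_range_succ (f := fun i => K.choose i) (n := m + 1),
      sum_range_succ (f := fun i => K.choose i) (n := m), Nat.choose_succ_succ]
    ring

lemma one_le_sum_choose (K d : ℕ) : 1 ≤ ∑ i ∈ range (d + 1), K.choose i := by
  calc 1 = K.choose 0 := (Nat.choose_zero_right K).symm
  _ ≤ ∑ i ∈ range (d + 1), K.choose i :=
    Finset.single_le_sum (f := fun i => K.choose i) (fun i _ => Nat.zero_le _)
      (Finset.mem_range.2 (Nat.succ_pos d))

theorem signBound : ∀ (K d : ℕ) (V : Type) (_ : AddCommGroup V), ∀ (_ : Module ℝ V)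
    (_ : FiniteDimensional ℝ V),
    finrank ℝ V ≤ d → ∀ f : Fin K → V →ᵃ[ℝ] ℝ,
    (realizedSigns f).ncard ≤ ∑ i ∈ range (d + 1), K.choose i := by
  intro K
  induction K with
  | zero =>
    intro d V _ _ _ hd f
    have hsub : (realizedSigns f).Subsingleton := fun s _ t _ => funext fun k => k.elim0
    calc (realizedSigns f).ncard ≤ 1 :=
      (Set.ncard_le_one_iff (Set.toFinite _)).2 fun ha hb => hsub ha hb
    _ ≤ _ := one_le_sum_choose 0 d
  | succ K IH =>
    intro d V _ _ _ hd f
    rcases Nat.eq_zero_or_pos d with rfl | hdpos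
    · have hV : Subsingleton V := finrank_zero_iff.1 (Nat.le_zero.1 hd)
      have hsub : (realizedSigns f).Subsingleton := by
        intro s hs t ht
        obtain ⟨x, hx⟩ := hs
        obtain ⟨y, hy⟩ := ht
        have hxy : y = x := Subsingleton.elim y x
        rw [hxy] at hy
        funext k
        have h1 := hx k
        have h2 := hy k
        cases hsk : s k <;> cases htk : t k <;> rw [hsk] at h1 <;> rw [htk] at h2 <;>
          simp at h1 h2 <;> first | rfl | linarith
      calc (realizedSigns f).ncard ≤ 1 :=
        (Set.ncard_le_one_iff (Set.toFinite _)).2 fun ha hb => hsub ha hb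
      _ ≤ _ := one_le_sum_choose (K + 1) 0
    · obtain ⟨e, rfl⟩ : ∃ e, d = e + 1 := ⟨d - 1, (Nat.succ_pred_eq_of_pos hdpos).symm⟩
      set g : Fin K → V →ᵃ[ℝ] ℝ := fun k => f k.castSucc with hg
      set drop : (Fin (K + 1) → Bool) → (Fin K → Bool) := fun s k => s k.castSucc with hdrop
      set S : Set (Fin (K + 1) → Bool) := realizedSigns f with hS
      set S' : Set (Fin K → Bool) := realizedSigns g with hS'
      set A : Set (Fin (K + 1) → Bool) := {s | s ∈ S ∧ s (Fin.last K) = true} with hA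
      set B : Set (Fin (K + 1) → Bool) := {s | s ∈ S ∧ s (Fin.last K) = false} with hB
      -- basic facts
      have hSAB : S ⊆ A ∪ B := by
        intro s hs
        cases hl : s (Fin.last K)
        · exact Or.inr ⟨hs, hl⟩
        · exact Or.inl ⟨hs, hl⟩
      have hinjA : Set.InjOn drop A := by
        intro s hs t ht hst
        funext k
        refine Fin.lastCases ?_ (fun i => ?_) k
        · rw [hs.2, ht.2]
        · exact congrFun hst i
      have hinjB : Set.InjOn drop B := by
        intro s hs t ht hst
        funext k
        refine Fin.lastCases ?_ (fun i => ?_) k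
        · rw [hs.2, ht.2]
        · exact congrFun hst i
      have hsubA : drop '' A ⊆ S' := by
        rintro _ ⟨s, hs, rfl⟩
        obtain ⟨x, hx⟩ := hs.1
        exact ⟨x, fun k => hx k.castSucc⟩
      have hsubB : drop '' B ⊆ S' := by
        rintro _ ⟨s, hs, rfl⟩
        obtain ⟨x, hx⟩ := hs.1
        exact ⟨x, fun k => hx k.castSucc⟩
      -- the key intersection bound
      have hkey : (drop '' A ∩ drop '' B).ncard ≤ ∑ i ∈ range (e + 1), K.choose i := by
        rcases Set.eq_empty_or_nonempty (drop '' A ∩ drop '' B) with hE | ⟨s0, hs0⟩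
        · rw [hE]; simp
        · -- obtain a point on the zero set of the last functional
          obtain ⟨⟨sA0, hsA0, hdA0⟩, ⟨sB0, hsB0, hdB0⟩⟩ := hs0
          obtain ⟨x0, hx0⟩ := hsA0.1
          obtain ⟨y0, hy0⟩ := hsB0.1
          have hx0l : 0 < f (Fin.last K) x0 := by
            have := hx0 (Fin.last K); rw [hsA0.2] at this; simpa using this
          have hy0l : f (Fin.last K) y0 < 0 := by
            have := hy0 (Fin.last K); rw [hsB0.2] at this; simpa using this
          obtain ⟨p, hp0, -⟩ := affine_ivt (f (Fin.last K)) hx0l hy0l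
          have hlin : (f (Fin.last K)).linear ≠ 0 := by
            intro h
            have h1 : (f (Fin.last K)).linear (x0 - p) = f (Fin.last K) x0 - f (Fin.last K) p :=
              (f (Fin.last K)).linearMap_vsub x0 p
            rw [h] at h1
            simp [hp0] at h1
            linarith
          set U : Submodule ℝ V := LinearMap.ker (f (Fin.last K)).linear with hU
          have hrange : LinearMap.range (f (Fin.last K)).linear = ⊤ := by
            rw [LinearMap.range_eq_top]
            intro c
            obtain ⟨v, hv⟩ : ∃ v, (f (Fin.last K)).linear v ≠ 0 := by
              by_contra hc
              push_neg at hc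
              exact hlin (LinearMap.ext fun v => by simpa using hc v)
            exact ⟨(c / (f (Fin.last K)).linear v) • v, by
              rw [map_smul, smul_eq_mul, div_mul_cancel₀ _ hv]⟩
          have hUrank : finrank ℝ U ≤ e := by
            have h1 := LinearMap.finrank_range_add_finrank_ker (f (Fin.last K)).linear
            rw [hrange] at h1
            rw [finrank_top] at h1
            have h2 : finrank ℝ ℝ = 1 := finrank_self ℝ
            rw [hU]
            omega
          -- inclusion affine map
          set incl : U →ᵃ[ℝ] V :=
            { toFun := fun u => (u : V) + p
              linear := U.subtype
              map_vadd' := by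
                intro p' v
                show ((v + p' : U) : V) + p = (v : V) + (((p' : U) : V) + p)
                push_cast
                abel } with hincl
          set h : Fin K → ↥U →ᵃ[ℝ] ℝ := fun k => (g k).comp incl with hh
          have hsubset : drop '' A ∩ drop '' B ⊆ realizedSigns h := by
            rintro s' ⟨⟨sA, hsA, rfl⟩, sB, hsB, hdB⟩
            obtain ⟨xp, hxp⟩ := hsA.1
            obtain ⟨xm, hxm⟩ := hsB.1
            have hxpl : 0 < f (Fin.last K) xp := by
              have := hxp (Fin.last K); rw [hsA.2] at this; simpa using this
            have hxml : f (Fin.last K) xm < 0 := by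
              have := hxm (Fin.last K); rw [hsB.2] at this; simpa using this
            obtain ⟨z, hz0, hzsigns⟩ := affine_ivt (f (Fin.last K)) hxpl hxml
            have hzU : z - p ∈ U := by
              rw [hU, LinearMap.mem_ker]
              have h1 : (f (Fin.last K)).linear (z - p) = f (Fin.last K) z - f (Fin.last K) p :=
                (f (Fin.last K)).linearMap_vsub z p
              rw [hz0, hp0] at h1
              simpa using h1
            refine ⟨⟨z - p, hzU⟩, fun k => ?_⟩
            have hzeval : h k ⟨z - p, hzU⟩ = g k z := by
              show g k ((z - p) + p) = g k z
              rw [sub_add_cancel]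
            rw [hzeval]
            have hkA := hxp k.castSucc
            have hkB := hxm k.castSucc
            have heq : sB k.castSucc = sA k.castSucc := congrFun hdB k
            rw [heq] at hkB
            cases hsk : sA k.castSucc
            · rw [hsk] at hkA hkB
              simp only [Bool.false_eq_true, if_false] at hkA hkB
              simpa [hdrop, hsk] using (hzsigns (g k)).2 hkA hkB
            · rw [hsk] at hkA hkB
              simp only [if_true] at hkA hkB
              simpa [hdrop, hsk] using (hzsigns (g k)).1 hkA hkB
          calc (drop '' A ∩ drop '' B).ncard ≤ (realizedSigns h).ncard :=
            Set.ncard_le_ncard hsubset (Set.toFinite _)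
          _ ≤ ∑ i ∈ range (e + 1), K.choose i := IH e U inferInstance inferInstance inferInstance hUrank h
      -- assemble
      have hchain : S.ncard ≤ A.ncard + B.ncard := by
        calc S.ncard ≤ (A ∪ B).ncard := Set.ncard_le_ncard hSAB (Set.toFinite _)
        _ ≤ A.ncard + B.ncard := Set.ncard_union_le A B
      have hAeq : A.ncard = (drop '' A).ncard := (Set.ncard_image_of_injOn hinjA).symm
      have hBeq : B.ncard = (drop '' B).ncard := (Set.ncard_image_of_injOn hinjB).symm
      have hunion : (drop '' A ∪ drop '' B).ncard + (drop '' A ∩ drop '' B).ncard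
          = (drop '' A).ncard + (drop '' B).ncard :=
        Set.ncard_union_add_ncard_inter _ _ (Set.toFinite _) (Set.toFinite _)
      have hS'bound : (drop '' A ∪ drop '' B).ncard ≤ ∑ i ∈ range (e + 1 + 1), K.choose i := by
        calc (drop '' A ∪ drop '' B).ncard ≤ S'.ncard :=
          Set.ncard_le_ncard (Set.union_subset hsubA hsubB) (Set.toFinite _)
        _ ≤ _ := IH (e + 1) V inferInstance inferInstance inferInstance hd g
      calc S.ncard ≤ A.ncard + B.ncard := hchain
      _ = (drop '' A ∪ drop '' B).ncard + (drop '' A ∩ drop '' B).ncard := by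
          rw [hunion, hAeq, hBeq]
      _ ≤ ∑ i ∈ range (e + 1 + 1), K.choose i + ∑ i ∈ range (e + 1), K.choose i :=
          Nat.add_le_add hS'bound hkey
      _ = ∑ i ∈ range (e + 1 + 1), (K + 1).choose i := (pascal_sum K (e + 1)).symm

lemma signBound_fintype {ι : Type} [Fintype ι] {V : Type} [AddCommGroup V] [Module ℝ V]
    [FiniteDimensional ℝ V] {d : ℕ} (hd : finrank ℝ V ≤ d) (f : ι → V →ᵃ[ℝ] ℝ) :
    (realizedSigns f).ncard ≤ ∑ i ∈ range (d + 1), (Fintype.card ι).choose i := by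
  classical
  let e := Fintype.equivFin ι
  have hinj : Function.Injective (fun s : ι → Bool => s ∘ ⇑e.symm) := by
    intro s t hst
    funext i
    have := congrFun hst (e i)
    simpa using this
  have himg : (fun s : ι → Bool => s ∘ ⇑e.symm) '' realizedSigns f
      ⊆ realizedSigns (fun k => f (e.symm k)) := by
    rintro _ ⟨s, ⟨x, hx⟩, rfl⟩
    exact ⟨x, fun k => hx (e.symm k)⟩
  calc (realizedSigns f).ncard
      = ((fun s : ι → Bool => s ∘ ⇑e.symm) '' realizedSigns f).ncard :=
        (Set.ncard_image_of_injective _ hinj).symm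
  _ ≤ (realizedSigns (fun k => f (e.symm k))).ncard :=
        Set.ncard_le_ncard himg (Set.toFinite _)
  _ ≤ _ := signBound (Fintype.card ι) d V inferInstance inferInstance inferInstance hd _

lemma bis_eval {V : Type*} [NormedAddCommGroup V] [InnerProductSpace ℝ V] (a b x : V) :
    (((2:ℝ) • innerₛₗ ℝ (a - b)).toAffineMap + AffineMap.const ℝ V (‖b‖^2 - ‖a‖^2)) x
      = ‖x - b‖^2 - ‖x - a‖^2 := by
  have h1 : (((2:ℝ) • innerₛₗ ℝ (a - b)).toAffineMap + AffineMap.const ℝ V (‖b‖^2 - ‖a‖^2)) x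
      = 2 * (inner ℝ (a - b) x : ℝ) + (‖b‖^2 - ‖a‖^2) := by
    simp [innerₛₗ_apply_apply, inner_sub_left]
  rw [h1, norm_sub_sq_real x b, norm_sub_sq_real x a, inner_sub_left,
    real_inner_comm x a, real_inner_comm x b]
  ring

lemma dist_sq_pos {V : Type*} [NormedAddCommGroup V] [InnerProductSpace ℝ V] {a b x : V}
    (h : dist a x < dist b x) : 0 < ‖x - b‖^2 - ‖x - a‖^2 := by
  rw [dist_eq_norm, dist_eq_norm] at h
  rw [sub_pos]
  have h' : ‖x - a‖ < ‖x - b‖ := by rwa [norm_sub_rev x a, norm_sub_rev x b]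
  exact pow_lt_pow_left₀ h' (norm_nonneg _) two_ne_zero

/-- A ranking (linear order of `{1,…,n}`, encoded as a permutation `σ` sending rank
positions to objects, so that `i` precedes `j` iff `σ⁻¹ i < σ⁻¹ j`) is realizable for the
configuration `θ` if some reference point `r` orders the objects by distance accordingly. -/
def realizableRankings {n d : ℕ} (θ : Fin n → EuclideanSpace ℝ (Fin d)) :
    Set (Equiv.Perm (Fin n)) :=
  {σ | ∃ r : EuclideanSpace ℝ (Fin d),
    ∀ i j : Fin n, σ.symm i < σ.symm j ↔ dist (θ i) r < dist (θ j) r}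

/-- for every configuration of `n` points in `ℝ^d` (no genericity needed),
the number of realizable rankings is at most `∑_{i=0}^{d} C(n(n-1)/2, i)`. -/
theorem stmt_3 (n d : ℕ) (θ : Fin n → EuclideanSpace ℝ (Fin d)) :
    (realizableRankings θ).ncard ≤ ∑ i ∈ Finset.range (d + 1), (n * (n - 1) / 2).choose i := by
  classical
  set ι := {p : Fin n × Fin n // p.1 < p.2} with hι
  set F : ι → EuclideanSpace ℝ (Fin d) →ᵃ[ℝ] ℝ := fun p =>
    ((2:ℝ) • innerₛₗ ℝ (θ p.1.1 - θ p.1.2)).toAffineMap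
      + AffineMap.const ℝ _ (‖θ p.1.2‖^2 - ‖θ p.1.1‖^2) with hF
  have hFeval : ∀ (p : ι) (x : EuclideanSpace ℝ (Fin d)),
      F p x = ‖x - θ p.1.2‖^2 - ‖x - θ p.1.1‖^2 := fun p x => bis_eval _ _ _
  set toSign : Equiv.Perm (Fin n) → ι → Bool :=
    fun σ p => decide (σ.symm p.1.1 < σ.symm p.1.2) with htoSign
  have hmaps : toSign '' realizableRankings θ ⊆ realizedSigns F := by
    rintro _ ⟨σ, ⟨r, hr⟩, rfl⟩
    refine ⟨r, fun p => ?_⟩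
    by_cases hlt : σ.symm p.1.1 < σ.symm p.1.2
    · have hdist : dist (θ p.1.1) r < dist (θ p.1.2) r := (hr _ _).1 hlt
      have h0 : 0 < F p r := by rw [hFeval]; exact dist_sq_pos hdist
      simp [htoSign, hlt, h0]
    · have hne : σ.symm p.1.2 ≠ σ.symm p.1.1 := fun hcon =>
        (ne_of_lt p.2) (σ.symm.injective hcon).symm
      have hgt : σ.symm p.1.2 < σ.symm p.1.1 := lt_of_le_of_ne (not_lt.1 hlt) hne
      have hdist : dist (θ p.1.2) r < dist (θ p.1.1) r := (hr _ _).1 hgt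
      have h0 : F p r < 0 := by
        rw [hFeval]
        have := dist_sq_pos (a := θ p.1.2) (b := θ p.1.1) (x := r) hdist
        linarith
      simp [htoSign, hlt, h0]
  have hinjOn : Set.InjOn toSign (realizableRankings θ) := by
    intro σ hσ τ hτ hst
    have hiff : ∀ i j : Fin n, σ.symm i < σ.symm j → τ.symm i < τ.symm j := by
      intro i j hlt
      rcases lt_trichotomy i j with h | rfl | h
      · have hc := congrFun hst (⟨(i, j), h⟩ : ι)
        simp only [htoSign, decide_eq_decide] at hc
        exact hc.1 hlt
      · exact absurd hlt (lt_irrefl _)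
      · have hc := congrFun hst (⟨(j, i), h⟩ : ι)
        simp only [htoSign, decide_eq_decide] at hc
        have hfalse : ¬ σ.symm j < σ.symm i := asymm hlt
        have hfalse' : ¬ τ.symm j < τ.symm i := fun hcon => hfalse (hc.2 hcon)
        have hne : τ.symm i ≠ τ.symm j := fun hcon =>
          (ne_of_lt hlt) (congrArg σ.symm (τ.symm.injective hcon) ▸ rfl)
        exact lt_of_le_of_ne (not_lt.1 hfalse') hne
    have hmono : StrictMono fun a => τ.symm (σ a) := by
      intro a b hab
      apply hiff
      simpa using hab
    have hrange : Set.range (fun a => τ.symm (σ a)) = Set.range (id : Fin n → Fin n) := by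
      rw [Set.range_id]
      exact (σ.trans τ.symm).surjective.range_eq
    have hid : (fun a => τ.symm (σ a)) = id := by
      have hwf : WellFoundedLT (Fin n) := inferInstance
      exact (StrictMono.range_inj hmono (strictMono_id (α := Fin n))).1 hrange
    refine Equiv.ext fun a => ?_
    have := congrFun hid a
    simp only [id] at this
    calc σ a = τ (τ.symm (σ a)) := (τ.apply_symm_apply _).symm
    _ = τ a := by rw [this]
  have hcard : Fintype.card ι ≤ n * (n - 1) / 2 := by
    have hinj2 : Function.Injective (fun p : ι =>
        (⟨{p.1.1, p.1.2}, Finset.card_pair (ne_of_lt p.2)⟩ :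
          {s : Finset (Fin n) // s.card = 2})) := by
      rintro ⟨⟨i, j⟩, hij⟩ ⟨⟨k, l⟩, hkl⟩ hpq
      simp only [Subtype.mk.injEq] at hpq ⊢
      have hi : i = k ∨ i = l := by
        have : i ∈ ({k, l} : Finset (Fin n)) := by
          rw [← hpq]; exact Finset.mem_insert_self i {j}
        simpa using this
      rcases hi with rfl | rfl
      · have hj : j = i ∨ j = l := by
          have : j ∈ ({i, l} : Finset (Fin n)) := by
            rw [← hpq]; simp
          simpa using this
        rcases hj with rfl | rfl
        · exact absurd hij (lt_irrefl _)
        · rfl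
      · have hk : k = i ∨ k = j := by
          have : k ∈ ({i, j} : Finset (Fin n)) := by
            rw [hpq]; simp
          simpa using this
        rcases hk with rfl | rfl
        · exact absurd hkl (lt_irrefl _)
        · exact absurd (hij.trans hkl) (lt_irrefl _)
    calc Fintype.card ι ≤ Fintype.card {s : Finset (Fin n) // s.card = 2} :=
          Fintype.card_le_of_injective _ hinj2
    _ = (Fintype.card (Fin n)).choose 2 := Fintype.card_finset_len 2
    _ = n.choose 2 := by rw [Fintype.card_fin]
    _ = n * (n - 1) / 2 := Nat.choose_two_right n
  calc (realizableRankings θ).ncard = (toSign '' realizableRankings θ).ncard :=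
        (Set.ncard_image_of_injOn hinjOn).symm
  _ ≤ (realizedSigns F).ncard := Set.ncard_le_ncard hmaps (Set.toFinite _)
  _ ≤ ∑ i ∈ range (d + 1), (Fintype.card ι).choose i :=
        signBound_fintype (le_of_eq finrank_euclideanSpace_fin) F
  _ ≤ ∑ i ∈ Finset.range (d + 1), (n * (n - 1) / 2).choose i :=
        Finset.sum_le_sum fun i _ => Nat.choose_le_choose i hcard
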